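/- Let G be a finite undirected multigraph with s, t ∈ V(G), s ≠ t, let Z ⊆ E(G) be a star (s,t)-cut, and let P be a witnessing (s,t)-flow for Z in G. Let u, v ∈ V(P) be two vertices that are connected in G by a path none of whose edges is used by any path of P. Then either both u and v lie in R_s(Z), or both u and v lie in R_t(Z). -/

import Mathlib

/-!
A finite undirected multigraph (parallel edges allowed, no loops) is modelled by a
vertex type `V`, an edge type `E` (both finite) and an endpoint map `ends : E → Sym2 V`
such that no edge is a loop (`¬ (ends e).IsDiag`).
-/

namespace FlowAug

variable {V E : Type}

/-- Two vertices are adjacent in `G - X` if some edge outside `X` joins them. -/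
def Adj (ends : E → Sym2 V) (X : Set E) (u v : V) : Prop :=
  ∃ e, e ∉ X ∧ ends e = s(u, v)

/-- Reachability in `G - X`. -/
def Reach (ends : E → Sym2 V) (X : Set E) : V → V → Prop :=
  Relation.ReflTransGen (Adj ends X)

/-- `R_S(X)` : the set of vertices reachable from the vertex set `S` in `G - X`. -/
def RS (ends : E → Sym2 V) (X : Set E) (S : Set V) : Set V :=
  {v | ∃ u ∈ S, Reach ends X u v}

/-- `δ(S)` : the set of edges with exactly one endpoint in `S`. -/
def edgeBoundary (ends : E → Sym2 V) (S : Set V) : Set E :=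
  {e | ∃ u v, ends e = s(u, v) ∧ u ∈ S ∧ v ∉ S}

/-- `X` is an `(S,T)`-cut. -/
def IsCut (ends : E → Sym2 V) (X : Set E) (S T : Set V) : Prop :=
  RS ends X S ∩ RS ends X T = ∅

/-- `X` is a minimal `(S,T)`-cut: no proper subset of `X` is an `(S,T)`-cut. -/
def IsMinimalCut (ends : E → Sym2 V) (X : Set E) (S T : Set V) : Prop :=
  IsCut ends X S T ∧ ∀ Y : Set E, Y ⊂ X → ¬ IsCut ends Y S T

/-- `X` is an `(S,T)`-cut of minimum cardinality. -/
def IsMinimumCut (ends : E → Sym2 V) (X : Set E) (S T : Set V) : Prop :=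
  IsCut ends X S T ∧ ∀ Y : Set E, IsCut ends Y S T → X.ncard ≤ Y.ncard

/-- `X` is an `(S,T)`-cut that is closest to `S`: every `(S,T)`-cut `X' ≠ X` with
`R_S(X') ⊆ R_S(X)` satisfies `|X'| > |X|`. -/
def IsClosestCut (ends : E → Sym2 V) (X : Set E) (S T : Set V) : Prop :=
  IsCut ends X S T ∧
    ∀ X' : Set E, IsCut ends X' S T → X' ≠ X →
      RS ends X' S ⊆ RS ends X S → X.ncard < X'.ncard

/-- `λ_G(s,t)` : the minimum cardinality of an `(s,t)`-cut (equivalently, by Menger's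
theorem, the maximum number of pairwise edge-disjoint `(s,t)`-paths). -/
noncomputable def lamCut (ends : E → Sym2 V) (s t : V) : ℕ :=
  sInf {n | ∃ X : Set E, IsCut ends X {s} {t} ∧ X.ncard = n}

/-- `Z_{s,t}` : the edges of `Z` with one endpoint in `R_s(Z)` and one in `R_t(Z)`. -/
def Zst (ends : E → Sym2 V) (s t : V) (Z : Set E) : Set E :=
  {e | e ∈ Z ∧ ∃ u v, ends e = s(u, v) ∧ u ∈ RS ends Z {s} ∧ v ∈ RS ends Z {t}}

/-- `Z` is a special `(s,t)`-cut: `Z` is an `(s,t)`-cut and `Z_{s,t}` is an `(s,t)`-cut. -/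
def IsSpecial (ends : E → Sym2 V) (s t : V) (Z : Set E) : Prop :=
  IsCut ends Z {s} {t} ∧ IsCut ends (Zst ends s t Z) {s} {t}

/-- `Z` is eligible for `(s,t)`: special, and every edge of `Z` has its endpoints in
different connected components of `G - Z`. -/
def IsEligible (ends : E → Sym2 V) (s t : V) (Z : Set E) : Prop :=
  IsSpecial ends s t Z ∧ ∀ e ∈ Z, ∀ u v : V, ends e = s(u, v) → ¬ Reach ends Z u v

/-- `Z` is a star `(s,t)`-cut: an `(s,t)`-cut each of whose edges has exactly one
endpoint in `R_s(Z)`. -/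
def IsStarCut (ends : E → Sym2 V) (s t : V) (Z : Set E) : Prop :=
  IsCut ends Z {s} {t} ∧
    ∀ e ∈ Z, ∃ u v : V, ends e = s(u, v) ∧ u ∈ RS ends Z {s} ∧ v ∉ RS ends Z {s}

/-- A path from `s` to `t` in the multigraph described by `ends`, given by its
sequence of vertices and traversed edges. -/
structure MGPath (V E : Type) (ends : E → Sym2 V) (s t : V) where
  n : ℕ
  vert : Fin (n + 1) → V
  edge : Fin n → E
  vert_zero : vert 0 = s
  vert_last : vert (Fin.last n) = t
  ends_eq : ∀ i : Fin n, ends (edge i) = s(vert i.castSucc, vert i.succ)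

/-- A family of paths is (pairwise) edge-disjoint: no edge is used twice, neither on
a single path nor on two different paths. -/
def EdgeDisjoint {ends : E → Sym2 V} {s t : V} {k : ℕ}
    (P : Fin k → MGPath V E ends s t) : Prop :=
  Function.Injective fun p : (Σ i : Fin k, Fin (P i).n) => (P p.1).edge p.2

/-- `P` is a witnessing `(s,t)`-flow for `Z`: a family of `λ_G(s,t)` pairwise
edge-disjoint `(s,t)`-paths such that every edge of `Z_{s,t}` occurs on a path of `P`
and every path of `P` contains exactly one edge of `Z`. -/
def IsWitnessingFlow (ends : E → Sym2 V) (s t : V) (Z : Set E) {k : ℕ}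
    (P : Fin k → MGPath V E ends s t) : Prop :=
  k = lamCut ends s t ∧ EdgeDisjoint P ∧
    (∀ e ∈ Zst ends s t Z, ∃ (i : Fin k) (j : Fin (P i).n), (P i).edge j = e) ∧
    ∀ i : Fin k, ∃! j : Fin (P i).n, (P i).edge j ∈ Z

/-- The vertices occurring on the paths of a family `P`. -/
def pathVerts {ends : E → Sym2 V} {s t : V} {k : ℕ}
    (P : Fin k → MGPath V E ends s t) : Set V :=
  {v | ∃ (i : Fin k) (m : Fin ((P i).n + 1)), (P i).vert m = v}

/-- The edges occurring on the paths of a family `P`. -/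
def pathEdges {ends : E → Sym2 V} {s t : V} {k : ℕ}
    (P : Fin k → MGPath V E ends s t) : Set E :=
  {e | ∃ (i : Fin k) (j : Fin (P i).n), (P i).edge j = e}

/-- The arcs obtained by orienting every edge of every path of `P` in the forward
direction (from `s` towards `t`). -/
def DirAdjOnFlow {ends : E → Sym2 V} {s t : V} {k : ℕ}
    (P : Fin k → MGPath V E ends s t) (u v : V) : Prop :=
  ∃ (i : Fin k) (l : Fin (P i).n), (P i).vert l.castSucc = u ∧ (P i).vert l.succ = v

/-- `N[S]` : the closed neighborhood of `S`. -/
def closedNbhd (ends : E → Sym2 V) (S : Set V) : Set V :=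
  S ∪ {v | ∃ u ∈ S, ∃ e : E, ends e = s(u, v)}

/-- `X` is the minimum `(s,t)`-cut closest to `s` among all minimum `(s,t)`-cuts
satisfying the property `P`. -/
def IsClosestMinCutAmong (ends : E → Sym2 V) (s t : V) (P : Set E → Prop)
    (X : Set E) : Prop :=
  IsMinimumCut ends X {s} {t} ∧ P X ∧
    ∀ Y : Set E, IsMinimumCut ends Y {s} {t} → P Y → Y ≠ X →
      RS ends Y {s} ⊆ RS ends X {s} → X.ncard < Y.ncard

/-- `C 0, …, C p` is the canonical sequence of non-crossing minimum `(s,t)`-cuts: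
`C 0` is the unique minimum `(s,t)`-cut closest to `s`; `C i` is the unique minimum
`(s,t)`-cut closest to `s` among all minimum `(s,t)`-cuts `X` with
`N[R_s(C (i-1))] ⊆ R_s(X)`; and `p` is the largest index for which such a cut exists. -/
def CanonSeq (ends : E → Sym2 V) (s t : V) (p : ℕ) (C : ℕ → Set E) : Prop :=
  IsClosestMinCutAmong ends s t (fun _ => True) (C 0) ∧
    (∀ i : ℕ, 0 < i → i ≤ p →
      IsClosestMinCutAmong ends s t
        (fun X => closedNbhd ends (RS ends (C (i - 1)) {s}) ⊆ RS ends X {s}) (C i)) ∧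
    ¬ ∃ X : Set E, IsMinimumCut ends X {s} {t} ∧
        closedNbhd ends (RS ends (C p) {s}) ⊆ RS ends X {s}

/-- The blocks `V_0, …, V_{p+1}` associated with the canonical sequence of cuts. -/
def blockOf (ends : E → Sym2 V) (s : V) (p : ℕ) (C : ℕ → Set E) (i : ℕ) : Set V :=
  if i = 0 then RS ends (C 0) {s}
  else if i ≤ p then RS ends (C i) {s} \ RS ends (C (i - 1)) {s}
  else Set.univ \ RS ends (C p) {s}

/-- Adjacency inside the induced subgraph `G[B]`. -/
def AdjIn (ends : E → Sym2 V) (B : Set V) (u v : V) : Prop :=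
  u ∈ B ∧ v ∈ B ∧ ∃ e : E, ends e = s(u, v)

/-- Reachability inside the induced subgraph `G[B]`. -/
def ReachIn (ends : E → Sym2 V) (B : Set V) : V → V → Prop :=
  Relation.ReflTransGen (AdjIn ends B)

/-- The induced subgraph `G[B]` is connected. -/
def ConnIn (ends : E → Sym2 V) (B : Set V) : Prop :=
  ∀ u ∈ B, ∀ v ∈ B, ReachIn ends B u v

/-- The connected component of `u` in the induced subgraph `G[B]`. -/
def compIn (ends : E → Sym2 V) (B : Set V) (u : V) : Set V :=
  {v | v ∈ B ∧ ReachIn ends B u v}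

/-- The set of connected components of the induced subgraph `G[B]`. -/
def componentsIn (ends : E → Sym2 V) (B : Set V) : Set (Set V) :=
  {K | ∃ u ∈ B, K = compIn ends B u}

/-- The union of the blocks `V_a, …, V_b`. -/
def unionBlocks (ends : E → Sym2 V) (s : V) (p : ℕ) (C : ℕ → Set E)
    (a b : ℕ) : Set V :=
  ⋃ j ∈ Set.Icc a b, blockOf ends s p C j

/-- `st` encodes the decomposition of the blocks `V_0, …, V_{p+1}` into bundles
`W_0, …, W_{q+1}`: bundle `W_i` consists of the blocks `V_{st i}, …, V_{st (i+1) - 1}`.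
`W_0 = V_0`, and each further bundle is greedily either a single connected block, or a
maximal union of contiguous blocks inducing a disconnected subgraph. -/
def IsBundleSeq (ends : E → Sym2 V) (s : V) (p : ℕ) (C : ℕ → Set E)
    (q : ℕ) (st : ℕ → ℕ) : Prop :=
  st 0 = 0 ∧ st 1 = 1 ∧ st (q + 2) = p + 2 ∧
    (∀ i j : ℕ, i < j → j ≤ q + 2 → st i < st j) ∧
    ∀ i : ℕ, 1 ≤ i → i ≤ q + 1 →
      (st (i + 1) = st i + 1 ∧ ConnIn ends (blockOf ends s p C (st i))) ∨
      (¬ ConnIn ends (blockOf ends s p C (st i)) ∧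
        ¬ ConnIn ends (unionBlocks ends s p C (st i) (st (i + 1) - 1)) ∧
        ∀ j : ℕ, st (i + 1) - 1 < j → j ≤ p + 1 →
          ConnIn ends (unionBlocks ends s p C (st i) j))

/-- The bundle `W_i`. -/
def bundleOf (ends : E → Sym2 V) (s : V) (p : ℕ) (C : ℕ → Set E) (st : ℕ → ℕ)
    (i : ℕ) : Set V :=
  unionBlocks ends s p C (st i) (st (i + 1) - 1)

/-- `C'_i` : the cut (among `C_0, …, C_p`) separating bundle `W_i` from `W_{i+1}`. -/
def interCut (C : ℕ → Set E) (st : ℕ → ℕ) (i : ℕ) : Set E :=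
  C (st (i + 1) - 1)

/-- A bundle `W` is unaffected by `Z` if `N[W]` is contained in a single connected
component of `G - Z`. -/
def Unaffected (ends : E → Sym2 V) (Z : Set E) (W : Set V) : Prop :=
  ∀ u ∈ closedNbhd ends W, ∀ v ∈ closedNbhd ends W, Reach ends Z u v

/-- The stretch `W_{a,b} = W_a ∪ ⋯ ∪ W_b` of bundles. -/
def stretchSet (ends : E → Sym2 V) (s : V) (p : ℕ) (C : ℕ → Set E) (st : ℕ → ℕ)
    (a b : ℕ) : Set V :=
  ⋃ i ∈ Set.Icc a b, bundleOf ends s p C st i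

/-- The left interface of a stretch starting at bundle `W_a`. -/
def leftInterface (ends : E → Sym2 V) (s : V) (p : ℕ) (C : ℕ → Set E) (st : ℕ → ℕ)
    (a : ℕ) : Set V :=
  if a = 0 then {s}
  else {v | v ∈ bundleOf ends s p C st a ∧ ∃ e ∈ interCut C st (a - 1), v ∈ ends e}

/-- The right interface of a stretch ending at bundle `W_b`. -/
def rightInterface (ends : E → Sym2 V) (s t : V) (p : ℕ) (C : ℕ → Set E)
    (st : ℕ → ℕ) (q b : ℕ) : Set V :=
  if b = q + 1 then {t}
  else {v | v ∈ bundleOf ends s p C st b ∧ ∃ e ∈ interCut C st b, v ∈ ends e}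

/-- `W_{a,b}` is a maximal stretch of bundles all affected by `Z`. -/
def MaxAffStretch (ends : E → Sym2 V) (s : V) (p : ℕ) (C : ℕ → Set E)
    (st : ℕ → ℕ) (q : ℕ) (Z : Set E) (a b : ℕ) : Prop :=
  a ≤ b ∧ b ≤ q + 1 ∧
    (∀ i : ℕ, a ≤ i → i ≤ b → ¬ Unaffected ends Z (bundleOf ends s p C st i)) ∧
    (a = 0 ∨ Unaffected ends Z (bundleOf ends s p C st (a - 1))) ∧
    (b = q + 1 ∨ Unaffected ends Z (bundleOf ends s p C st (b + 1)))

/-- `W_{a,b}` is a maximal stretch of bundles affected by `Z` containing both a vertex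
reachable from `s` and a vertex reachable from `t` in `G - Z`. -/
def StronglyAffStretch (ends : E → Sym2 V) (s t : V) (p : ℕ) (C : ℕ → Set E)
    (st : ℕ → ℕ) (q : ℕ) (Z : Set E) (a b : ℕ) : Prop :=
  MaxAffStretch ends s p C st q Z a b ∧
    (stretchSet ends s p C st a b ∩ RS ends Z {s}).Nonempty ∧
    (stretchSet ends s p C st a b ∩ RS ends Z {t}).Nonempty

/-- Adjacency inside the induced subgraph `G[B]` avoiding the edge set `X`. -/
def AdjInX (ends : E → Sym2 V) (B : Set V) (X : Set E) (u v : V) : Prop :=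
  u ∈ B ∧ v ∈ B ∧ ∃ e, e ∉ X ∧ ends e = s(u, v)

/-- Reachability inside `G[B] - X`. -/
def ReachInX (ends : E → Sym2 V) (B : Set V) (X : Set E) : V → V → Prop :=
  Relation.ReflTransGen (AdjInX ends B X)

/-- `X` is a star `(a,b)`-cut of the induced subgraph `H = G[B]`: in `H - X` no path
connects `a` and `b`, and every edge of `X` has exactly one endpoint reachable from
`a` in `H - X`. -/
def IsStarCutIn (ends : E → Sym2 V) (B : Set V) (a b : V) (X : Set E) : Prop :=
  ¬ ReachInX ends B X a b ∧
    ∀ e ∈ X, ∃ u v : V, ends e = s(u, v) ∧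
      ReachInX ends B X a u ∧ ¬ ReachInX ends B X a v

end FlowAug

namespace FlowAug


private lemma adj_symm' (ends : E → Sym2 V) (X : Set E) {a b : V}
    (h : Adj ends X a b) : Adj ends X b a := by
  obtain ⟨e, he, heq⟩ := h
  exact ⟨e, he, by rw [heq, Sym2.eq_swap]⟩

private lemma reach_symm' (ends : E → Sym2 V) (X : Set E) {a b : V}
    (h : Reach ends X a b) : Reach ends X b a :=
  (@Relation.ReflTransGen.symmetric _ (Adj ends X) ⟨fun _ _ h => adj_symm' ends X h⟩).symm _ _ h

private lemma mem_RS_singleton {ends : E → Sym2 V} {X : Set E} {a x : V} :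
    x ∈ RS ends X {a} ↔ Reach ends X a x := by
  simp [RS]

/-- Let `Z` be a star `(s,t)`-cut and `P` a witnessing `(s,t)`-flow
for `Z`.  If `u, v ∈ V(P)` are connected in `G` by a path using no edge of any path of
`P`, then either both `u` and `v` lie in `R_s(Z)` or both lie in `R_t(Z)`. -/
theorem flowVerts_same_side {V E : Type} [Fintype V] [Fintype E]
    (ends : E → Sym2 V) (hloop : ∀ e, ¬ (ends e).IsDiag)
    (s t : V) (hst : s ≠ t)
    (Z : Set E) (hZ : IsStarCut ends s t Z)
    {k : ℕ} (P : Fin k → MGPath V E ends s t)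
    (hP : IsWitnessingFlow ends s t Z P)
    (u v : V) (hu : u ∈ pathVerts P) (hv : v ∈ pathVerts P)
    (huv : Reach ends (pathEdges P) u v) :
    (u ∈ RS ends Z {s} ∧ v ∈ RS ends Z {s}) ∨
      (u ∈ RS ends Z {t} ∧ v ∈ RS ends Z {t}) := by
  obtain ⟨hcut, hstar⟩ := hZ
  obtain ⟨hk, hdisj, hZst, huniq⟩ := hP
  have hcut' : RS ends Z {s} ∩ RS ends Z {t} = ∅ := hcut
  -- Step 1: every path vertex is in R_s(Z) ∪ R_t(Z)
  have step1 : ∀ x ∈ pathVerts P, x ∈ RS ends Z {s} ∨ x ∈ RS ends Z {t} := by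
    rintro x ⟨i, m, rfl⟩
    obtain ⟨j, hjZ, hjuniq⟩ := huniq i
    have hjn : (j : ℕ) < (P i).n := j.isLt
    by_cases hm : (m : ℕ) ≤ (j : ℕ)
    · left
      rw [mem_RS_singleton]
      have key : ∀ a : ℕ, (ha : a ≤ (j : ℕ)) →
          Reach ends Z s ((P i).vert ⟨a, by omega⟩) := by
        intro a
        induction a with
        | zero =>
          intro _
          have h0 : (⟨0, by omega⟩ : Fin ((P i).n + 1)) = 0 := by
            ext; simp
          rw [h0, (P i).vert_zero]
          exact Relation.ReflTransGen.refl
        | succ a ih =>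
          intro ha
          have ha' : a ≤ (j : ℕ) := by omega
          have han : a < (P i).n := by omega
          refine Relation.ReflTransGen.tail (ih ha') ?_
          refine ⟨(P i).edge ⟨a, han⟩, ?_, ?_⟩
          · intro hmem
            have := hjuniq ⟨a, han⟩ hmem
            have : a = (j : ℕ) := congrArg Fin.val this
            omega
          · exact (P i).ends_eq ⟨a, han⟩
      exact key m hm
    · right
      rw [mem_RS_singleton]
      push_neg at hm
      have hmn : (m : ℕ) ≤ (P i).n := by have := m.isLt; omega
      have keyt : ∀ d : ℕ, (hd : d ≤ (P i).n - ((j : ℕ) + 1)) →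
          Reach ends Z ((P i).vert ⟨(P i).n - d, by omega⟩) t := by
        intro d
        induction d with
        | zero =>
          intro _
          have h0 : (⟨(P i).n - 0, by omega⟩ : Fin ((P i).n + 1)) = Fin.last (P i).n := by
            ext; simp
          rw [h0, (P i).vert_last]
          exact Relation.ReflTransGen.refl
        | succ d ih =>
          intro hd
          have hd' : d ≤ (P i).n - ((j : ℕ) + 1) := by omega
          set a := (P i).n - (d + 1) with hadef
          have haj : (j : ℕ) + 1 ≤ a := by omega
          have han : a < (P i).n := by omega
          refine Relation.ReflTransGen.head ?_ (ih hd')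
          refine ⟨(P i).edge ⟨a, han⟩, ?_, ?_⟩
          · intro hmem
            have := hjuniq ⟨a, han⟩ hmem
            have : a = (j : ℕ) := congrArg Fin.val this
            omega
          · have heq := (P i).ends_eq ⟨a, han⟩
            have hv2 : (⟨a, han⟩ : Fin (P i).n).succ =
                (⟨(P i).n - d, by omega⟩ : Fin ((P i).n + 1)) := by
              ext; simp [Fin.succ]; omega
            rw [hv2] at heq
            exact heq
      have hmd : (P i).n - ((P i).n - (m : ℕ)) = (m : ℕ) := by omega
      have := keyt ((P i).n - (m : ℕ)) (by omega)
      refine reach_symm' ends Z ?_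
      convert this using 2
      ext; simp [hmd]
  -- Step 2: invariance of R_t-membership along the connecting path
  have inv : ∀ {x y : V}, Adj ends (pathEdges P) x y →
      (x ∈ RS ends Z {t} ↔ y ∈ RS ends Z {t}) := by
    rintro x y ⟨e, heP, heq⟩
    by_cases heZ : e ∈ Z
    · obtain ⟨a, b, hab, haS, hbS⟩ := hstar e heZ
      have hbt : b ∉ RS ends Z {t} := by
        intro hbt
        exact heP (hZst e ⟨heZ, a, b, hab, haS, hbt⟩)
      have hat : a ∉ RS ends Z {t} := by
        intro hat
        have : a ∈ RS ends Z {s} ∩ RS ends Z {t} := ⟨haS, hat⟩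
        rw [hcut'] at this
        exact this
      have hxy : (x = a ∧ y = b) ∨ (x = b ∧ y = a) := by
        rw [heq] at hab
        exact Sym2.eq_iff.mp hab
      rcases hxy with ⟨rfl, rfl⟩ | ⟨rfl, rfl⟩ <;> simp [hat, hbt]
    · constructor
      · intro h
        rw [mem_RS_singleton] at h ⊢
        exact Relation.ReflTransGen.tail h ⟨e, heZ, heq⟩
      · intro h
        rw [mem_RS_singleton] at h ⊢
        exact Relation.ReflTransGen.tail h ⟨e, heZ, by rw [heq, Sym2.eq_swap]⟩
  have inv' : ∀ {x y : V}, Reach ends (pathEdges P) x y →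
      (x ∈ RS ends Z {t} ↔ y ∈ RS ends Z {t}) := by
    intro x y h
    have h' : Relation.ReflTransGen (Adj ends (pathEdges P)) x y := h
    clear h
    induction h' with
    | refl => exact Iff.rfl
    | tail _ h2 ih => exact ih.trans (inv h2)
  by_cases hut : u ∈ RS ends Z {t}
  · exact Or.inr ⟨hut, (inv' huv).mp hut⟩
  · have hus : u ∈ RS ends Z {s} := (step1 u hu).resolve_right hut
    have hvt : v ∉ RS ends Z {t} := fun h => hut ((inv' huv).mpr h)
    have hvs : v ∈ RS ends Z {s} := (step1 v hv).resolve_right hvt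
    exact Or.inl ⟨hus, hvs⟩


end FlowAug
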